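/- For x, z in the open unit ball B^n of ℝⁿ (n ≥ 3), nonzero with x ≠ z, and y = φ_x(z), one has |1/|x-y|^{n-2} - 1/[x,y]^{n-2}| = [x,z]^{n-2}(1-|z|^{n-2})/(|z|^{n-2}(1-|x|²)^{n-2}). -/

import Mathlib

open Metric


/-- The quantity `[x,y] = | y|x| - x/|x| |`. -/
noncomputable def br {n : ℕ} (x y : EuclideanSpace ℝ (Fin n)) : ℝ :=
  ‖‖x‖ • y - ‖x‖⁻¹ • x‖

/-- The Möbius transformation `φ_x` of the unit ball. -/
noncomputable def mobius {n : ℕ} (x y : EuclideanSpace ℝ (Fin n)) : EuclideanSpace ℝ (Fin n) :=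
  (br x y ^ 2)⁻¹ • (‖x - y‖ ^ 2 • x - (1 - ‖x‖ ^ 2) • (y - x))

lemma br_sq {n : ℕ} (x z : EuclideanSpace ℝ (Fin n)) (hx : x ≠ 0) :
    br x z ^ 2 = ‖x‖ ^ 2 * ‖z‖ ^ 2 - 2 * inner ℝ x z + 1 := by
  have hxn : ‖x‖ ≠ 0 := norm_ne_zero_iff.mpr hx
  rw [br, @norm_sub_sq_real]
  simp only [norm_smul, real_inner_smul_left, real_inner_smul_right,
    Real.norm_eq_abs, abs_norm, abs_inv, real_inner_self_eq_norm_sq, real_inner_comm z x]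
  field_simp

theorem stmt6 (n : ℕ) (hn : 3 ≤ n) (x z : EuclideanSpace ℝ (Fin n))
    (hx : x ∈ Metric.ball (0 : EuclideanSpace ℝ (Fin n)) 1)
    (hz : z ∈ Metric.ball (0 : EuclideanSpace ℝ (Fin n)) 1)
    (hx0 : x ≠ 0) (hz0 : z ≠ 0) (hxz : x ≠ z)
    (y : EuclideanSpace ℝ (Fin n)) (hy : y = mobius x z) :
    |1 / ‖x - y‖ ^ (n - 2) - 1 / br x y ^ (n - 2)|
      = br x z ^ (n - 2) * (1 - ‖z‖ ^ (n - 2)) / (‖z‖ ^ (n - 2) * (1 - ‖x‖ ^ 2) ^ (n - 2)) := by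
  have ha1 : ‖x‖ < 1 := by simpa using hx
  have hb1 : ‖z‖ < 1 := by simpa using hz
  have ha0 : 0 < ‖x‖ := norm_pos_iff.mpr hx0
  have hb0 : 0 < ‖z‖ := norm_pos_iff.mpr hz0
  have h1a : 0 < 1 - ‖x‖ ^ 2 := by nlinarith
  have h1b : 0 < 1 - ‖z‖ ^ 2 := by nlinarith
  have hd0 : 0 < ‖x - z‖ := by simpa [sub_ne_zero] using hxz
  -- the relation c² = d² + (1-a²)(1-b²)
  have hrel : br x z ^ 2 = ‖x - z‖ ^ 2 + (1 - ‖x‖ ^ 2) * (1 - ‖z‖ ^ 2) := by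
    rw [br_sq x z hx0, @norm_sub_sq_real]; ring
  have hc2 : 0 < br x z ^ 2 := by nlinarith
  have hcnn : 0 ≤ br x z := by rw [br]; exact norm_nonneg _
  have hc0 : 0 < br x z := by nlinarith
  have hc2ne : br x z ^ 2 ≠ 0 := ne_of_gt hc2
  have hdsub : ‖x - z‖ ^ 2 = br x z ^ 2 - (1 - ‖x‖ ^ 2) * (1 - ‖z‖ ^ 2) := by linarith
  -- x - y = ((1-a²)/c²) • (z - b² x)
  have hv : x - y = ((1 - ‖x‖ ^ 2) / br x z ^ 2) • (z - ‖z‖ ^ 2 • x) := by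
    rw [hy, mobius, hdsub]
    match_scalars <;> field_simp <;> ring
  have hw : ‖z - ‖z‖ ^ 2 • x‖ = ‖z‖ * br x z := by
    have h1 : ‖z - ‖z‖ ^ 2 • x‖ ^ 2 = (‖z‖ * br x z) ^ 2 := by
      rw [@norm_sub_sq_real, mul_pow, br_sq x z hx0]
      simp only [norm_smul, real_inner_smul_right, Real.norm_eq_abs, abs_norm,
        abs_pow, sq_abs, real_inner_comm z x]
      ring
    exact (pow_left_inj₀ (norm_nonneg _) (by positivity) two_ne_zero).mp h1
  have hxy : ‖x - y‖ = (1 - ‖x‖ ^ 2) * ‖z‖ / br x z := by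
    rw [hv, norm_smul, hw, Real.norm_eq_abs, abs_of_pos (by positivity)]
    field_simp
  have hw2 : ‖‖x - z‖ ^ 2 • x - (1 - ‖x‖ ^ 2) • (z - x)‖ ^ 2
      = ‖x - z‖ ^ 2 * br x z ^ 2 := by
    rw [@norm_sub_sq_real, br_sq x z hx0]
    simp only [norm_smul, real_inner_smul_left, real_inner_smul_right,
      mul_pow, Real.norm_eq_abs, abs_norm, abs_pow, sq_abs, inner_sub_right,
      real_inner_self_eq_norm_sq, norm_sub_rev z x]
    rw [show ‖x - z‖ ^ 2 = ‖x‖ ^ 2 - 2 * inner ℝ x z + ‖z‖ ^ 2 from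
      by rw [@norm_sub_sq_real]]
    ring
  have hy2 : ‖y‖ ^ 2 = ‖x - z‖ ^ 2 / br x z ^ 2 := by
    rw [hy, mobius, norm_smul, mul_pow, hw2, Real.norm_eq_abs, abs_inv, abs_of_pos hc2]
    field_simp
  have hbxy : br x y = (1 - ‖x‖ ^ 2) / br x z := by
    have hid : br x y ^ 2 = ‖x - y‖ ^ 2 + (1 - ‖x‖ ^ 2) * (1 - ‖y‖ ^ 2) := by
      rw [br_sq x y hx0, @norm_sub_sq_real]; ring
    have h2 : br x y ^ 2 = ((1 - ‖x‖ ^ 2) / br x z) ^ 2 := by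
      rw [hid, hxy, hy2, hdsub]; field_simp; ring
    have : 0 ≤ br x y := by rw [br]; exact norm_nonneg _
    exact (pow_left_inj₀ this (by positivity) two_ne_zero).mp h2
  -- final algebra
  have hm : 1 ≤ n - 2 := by omega
  have hbm : ‖z‖ ^ (n - 2) < 1 := pow_lt_one₀ (norm_nonneg z) hb1 (by omega)
  have hbe : ‖z‖ ≠ 0 := ne_of_gt hb0
  have hce : br x z ≠ 0 := ne_of_gt hc0
  have hae : 1 - ‖x‖ ^ 2 ≠ 0 := ne_of_gt h1a
  rw [hxy, hbxy]
  have key : 1 / ((1 - ‖x‖ ^ 2) * ‖z‖ / br x z) ^ (n - 2)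
      - 1 / ((1 - ‖x‖ ^ 2) / br x z) ^ (n - 2)
      = br x z ^ (n - 2) * (1 - ‖z‖ ^ (n - 2))
        / (‖z‖ ^ (n - 2) * (1 - ‖x‖ ^ 2) ^ (n - 2)) := by
    rw [div_pow, div_pow, mul_pow, one_div_div, one_div_div]
    field_simp
  rw [key, abs_of_nonneg]
  apply div_nonneg (mul_nonneg (by positivity) (by nlinarith)) (by positivity)
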